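/- Let B_k = { Σ_{i=0}^{k-1} ε_i 4^i : ε_i ∈ {1,2} } and A = ⋃_{k≥1} ⋃_{i=0}^{8} (i·4^{k-1} + B_k). Then for every integer n ≥ 3, there exist a, b ∈ A with a < b < n such that 2b = a + n (i.e., A is an AP₃-covering sequence). -/

import Mathlib

/-- B_k: integers whose k-digit base-4 expansion uses only digits 1 and 2. -/
def Bset (k : ℕ) : Set ℕ :=
  {m | ∃ ε : ℕ → ℕ, (∀ i < k, ε i = 1 ∨ ε i = 2) ∧
        m = ∑ i ∈ Finset.range k, ε i * 4 ^ i}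

/-- A = ⋃_{k ≥ 1} ⋃_{0 ≤ i ≤ 8} (i·4^{k-1} + B_k). -/
def Aset : Set ℕ :=
  {m | ∃ k : ℕ, 1 ≤ k ∧ ∃ i : ℕ, i ≤ 8 ∧ ∃ b ∈ Bset k, m = i * 4 ^ (k - 1) + b}

lemma digit_sum : ∀ k m : ℕ, m < 4 ^ k →
    ∑ i ∈ Finset.range k, (m / 4 ^ i % 4) * 4 ^ i = m := by
  intro k
  induction k with
  | zero => intro m hm; simp at hm ⊢; omega
  | succ k ih =>
    intro m hm
    rw [Finset.sum_range_succ']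
    have h1 : ∀ i : ℕ, m / 4 ^ (i + 1) = (m / 4) / 4 ^ i := by
      intro i
      rw [pow_succ']
      rw [Nat.div_div_eq_div_mul]
    have h2 : ∑ i ∈ Finset.range k, (m / 4 ^ (i + 1) % 4) * 4 ^ (i + 1)
        = 4 * ∑ i ∈ Finset.range k, ((m / 4) / 4 ^ i % 4) * 4 ^ i := by
      rw [Finset.mul_sum]
      apply Finset.sum_congr rfl
      intro i _
      rw [h1 i, pow_succ]
      ring
    have hm4 : m / 4 < 4 ^ k := by
      have : (4:ℕ) ^ (k+1) = 4 ^ k * 4 := pow_succ 4 k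
      omega
    rw [h2, ih (m / 4) hm4]
    simp
    omega

lemma geom4 : ∀ k : ℕ, 3 * (∑ i ∈ Finset.range k, 2 * 4 ^ i) + 2 = 2 * 4 ^ k := by
  intro k
  induction k with
  | zero => simp
  | succ k ih =>
    rw [Finset.sum_range_succ]
    have : (4:ℕ) ^ (k+1) = 4 ^ k * 4 := pow_succ 4 k
    omega

lemma key (k m : ℕ) (h : m < 4 ^ k) :
    ∃ b₀ ∈ Bset k, ∃ a₀ ∈ Bset k, 2 * b₀ = a₀ + m ∧ 3 * b₀ + 2 ≤ 2 * 4 ^ k := by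
  set d : ℕ → ℕ := fun i => m / 4 ^ i % 4 with hd
  refine ⟨∑ i ∈ Finset.range k, (if d i ≤ 1 then 1 else 2) * 4 ^ i,
    ⟨fun i => if d i ≤ 1 then 1 else 2, fun i _ => by dsimp only; split <;> simp, rfl⟩,
    ∑ i ∈ Finset.range k, (if d i % 2 = 0 then 2 else 1) * 4 ^ i,
    ⟨fun i => if d i % 2 = 0 then 2 else 1, fun i _ => by dsimp only; split <;> simp, rfl⟩,
    ?_, ?_⟩
  · have hsum : ∑ i ∈ Finset.range k, d i * 4 ^ i = m := digit_sum k m h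
    calc 2 * ∑ i ∈ Finset.range k, (if d i ≤ 1 then 1 else 2) * 4 ^ i
        = ∑ i ∈ Finset.range k, ((if d i % 2 = 0 then 2 else 1) + d i) * 4 ^ i := by
          rw [Finset.mul_sum]
          apply Finset.sum_congr rfl
          intro i _
          have hlt : d i < 4 := Nat.mod_lt _ (by norm_num)
          have : 2 * (if d i ≤ 1 then 1 else 2) = (if d i % 2 = 0 then 2 else 1) + d i := by
            interval_cases h : d i <;> simp
          rw [← mul_assoc, this]
      _ = (∑ i ∈ Finset.range k, (if d i % 2 = 0 then 2 else 1) * 4 ^ i) + m := by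
          rw [← hsum, ← Finset.sum_add_distrib]
          apply Finset.sum_congr rfl
          intro i _
          ring
  · have hle : ∑ i ∈ Finset.range k, (if d i ≤ 1 then 1 else 2) * 4 ^ i
        ≤ ∑ i ∈ Finset.range k, 2 * 4 ^ i := by
      apply Finset.sum_le_sum
      intro i _
      have : (if d i ≤ 1 then 1 else 2) ≤ 2 := by split <;> omega
      exact Nat.mul_le_mul_right _ this
    have := geom4 k
    omega

theorem stmt_6 :
    ∀ n : ℕ, 3 ≤ n → ∃ a ∈ Aset, ∃ b ∈ Aset, a < b ∧ b < n ∧ 2 * b = a + n := by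
  intro n hn
  rcases eq_or_lt_of_le hn with h3 | h4
  · -- n = 3 : take a = 1, b = 2
    have h1 : (1 : ℕ) ∈ Aset := by
      refine ⟨1, le_refl 1, 0, by norm_num, 1, ⟨fun _ => 1, fun i _ => Or.inl rfl, by simp⟩, by simp⟩
    have h2 : (2 : ℕ) ∈ Aset := by
      refine ⟨1, le_refl 1, 0, by norm_num, 2, ⟨fun _ => 2, fun i _ => Or.inr rfl, by simp⟩, by simp⟩
    exact ⟨1, h1, 2, h2, by omega, by omega, by omega⟩
  · -- n ≥ 4
    have hn4 : 4 ≤ n := h4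
    set k := Nat.log 4 n with hk
    have hk1 : 1 ≤ k := Nat.le_log_of_pow_le (by norm_num) (by simpa using hn4)
    have hpow_le : 4 ^ k ≤ n := Nat.pow_log_le_self 4 (by omega)
    have hlt : n < 4 ^ (k + 1) := Nat.lt_pow_succ_log_self (by norm_num) n
    set P := 4 ^ (k - 1) with hP
    have hPk : 4 ^ k = 4 * P := by
      rw [hP, ← pow_succ']
      congr 1
      omega
    have hPk1 : 4 ^ (k + 1) = 16 * P := by
      have : 4 ^ (k + 1) = 4 * 4 ^ k := by rw [pow_succ]; ring
      omega
    have hPpos : 0 < P := Nat.pow_pos (by norm_num)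
    set t := n / P with ht
    have htn : t * P ≤ n := Nat.div_mul_le_self n P
    have htn' : n < t * P + P := by
      have h1 := Nat.div_add_mod n P
      rw [← ht] at h1
      have h2 := Nat.mod_lt n hPpos
      have : P * t = t * P := by ring
      omega
    have ht4 : 4 ≤ t := by
      have : 4 * P ≤ n := by omega
      exact Nat.le_div_iff_mul_le hPpos |>.2 (by omega)
    have ht15 : t ≤ 15 := by
      by_contra hc
      push_neg at hc
      have : 16 * P ≤ t * P := Nat.mul_le_mul_right P (by omega)
      omega
    set s := t - 3 with hs
    set i := (s + 1) / 2 with hi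
    set j := 2 * i - s with hj
    have hsP : s * P ≤ n := le_trans (Nat.mul_le_mul_right P (by omega)) htn
    set m := n - s * P with hm
    have hmlt : m < 4 ^ k := by
      have hts : t * P = s * P + 3 * P := by
        rw [show t = s + 3 by omega]; ring
      omega
    obtain ⟨b₀, hb₀B, a₀, ha₀B, heq, hbd⟩ := key k m hmlt
    refine ⟨j * P + a₀, ⟨k, hk1, j, by omega, a₀, ha₀B, rfl⟩,
            i * P + b₀, ⟨k, hk1, i, by omega, b₀, hb₀B, rfl⟩, ?_, ?_, ?_⟩
    · -- a < b, deduced from 2b = a + n and b < n below; prove directly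
      have hbn : i * P + b₀ < n := by
        have hb3 : b₀ < 3 * P := by omega
        have hit : i + 3 ≤ t := by omega
        have : i * P + b₀ < (i + 3) * P := by
          have : (i + 3) * P = i * P + 3 * P := by ring
          omega
        have : (i + 3) * P ≤ t * P := Nat.mul_le_mul_right P hit
        omega
      have h2b : 2 * (i * P + b₀) = (j * P + a₀) + n := by
        have h2i : 2 * i = j + s := by omega
        have : 2 * (i * P + b₀) = (2 * i) * P + 2 * b₀ := by ring
        rw [this, h2i, heq]
        have : (j + s) * P = j * P + s * P := by ring
        omega
      omega
    · -- b < n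
      have hb3 : b₀ < 3 * P := by omega
      have hit : i + 3 ≤ t := by omega
      have h1 : i * P + b₀ < (i + 3) * P := by
        have : (i + 3) * P = i * P + 3 * P := by ring
        omega
      have h2 : (i + 3) * P ≤ t * P := Nat.mul_le_mul_right P hit
      omega
    · have h2i : 2 * i = j + s := by omega
      have : 2 * (i * P + b₀) = (2 * i) * P + 2 * b₀ := by ring
      rw [this, h2i, heq]
      have : (j + s) * P = j * P + s * P := by ring
      omega
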